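/- (Minty's lemma) Let G = (V,E) be a finite connected simple graph and let O be an orientation of G. Every edge of G belongs either to a directed cycle of O or to a directed cocycle of O, but not both. -/

import Mathlib

/-- An orientation of a simple graph: a choice of direction for each edge. -/
structure GraphOrientation {V : Type*} (G : SimpleGraph V) where
  dir : V → V → Prop
  adj_of_dir : ∀ u v, dir u v → G.Adj u v
  dir_iff_not : ∀ u v, G.Adj u v → (dir u v ↔ ¬ dir v u)

namespace GraphOrientation

variable {V : Type*} {G : SimpleGraph V}

/-- The outdegree of a vertex: the number of edges directed away from it. -/
noncomputable def outDegree (O : GraphOrientation G) (v : V) : ℕ :=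
  {u | O.dir v u}.ncard

/-- `v` is reachable from `u` by a directed path. -/
def Reaches (O : GraphOrientation G) : V → V → Prop :=
  Relation.ReflTransGen O.dir

/-- `C` is the edge set of a directed cycle of the orientation. -/
def IsDirCycle (O : GraphOrientation G) (C : Set (Sym2 V)) : Prop :=
  ∃ (v : V) (w : G.Walk v v), w.IsCycle ∧
    (∀ d ∈ w.darts, O.dir d.toProd.1 d.toProd.2) ∧ C = {e | e ∈ w.edges}

/-- The orientation is strongly connected. -/
def IsStronglyConnected (O : GraphOrientation G) : Prop := ∀ u v, O.Reaches u v

/-- Every vertex is reachable from `v0`. -/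
def IsConnectedFrom (O : GraphOrientation G) (v0 : V) : Prop := ∀ v, O.Reaches v0 v

/-- The set of edges on which two orientations differ. -/
def diffSet (O O' : GraphOrientation G) : Set (Sym2 V) :=
  {e | ∃ a b, e = s(a, b) ∧ O.dir a b ∧ O'.dir b a}

/-- `O'` is obtained from `O` by reversing exactly the edges of `A`. -/
def IsFlipOn (O O' : GraphOrientation G) (A : Set (Sym2 V)) : Prop :=
  (∀ u v, s(u, v) ∈ A → (O'.dir u v ↔ O.dir v u)) ∧
    (∀ u v, s(u, v) ∉ A → (O'.dir u v ↔ O.dir u v))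

/-- One cycle-flip step. -/
def CycleFlip (O O' : GraphOrientation G) : Prop :=
  ∃ C, O.IsDirCycle C ∧ O.IsFlipOn O' C

end GraphOrientation

/-- The cut defined by a vertex subset `U`: edges with exactly one endpoint in `U`. -/
def SimpleGraph.cutSet {V : Type*} (G : SimpleGraph V) (U : Set V) : Set (Sym2 V) :=
  {e | ∃ a b, e = s(a, b) ∧ G.Adj a b ∧ a ∈ U ∧ b ∉ U}

/-- A cocycle: a minimal nonempty cut. -/
def SimpleGraph.IsCocycle {V : Type*} (G : SimpleGraph V) (D : Set (Sym2 V)) : Prop :=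
  D.Nonempty ∧ (∃ U : Set V, D = G.cutSet U) ∧
    ∀ D' : Set (Sym2 V), D'.Nonempty → (∃ U : Set V, D' = G.cutSet U) → D' ⊆ D → D' = D

/-- A directed cocycle: a cocycle all of whose edges are directed toward the same side. -/
def GraphOrientation.IsDirCocycle {V : Type*} {G : SimpleGraph V}
    (O : GraphOrientation G) (D : Set (Sym2 V)) : Prop :=
  G.IsCocycle D ∧ ∃ U : Set V, D = G.cutSet U ∧ ∀ a b, O.dir a b → s(a, b) ∈ D → b ∈ U

/-- The excess of a subset of vertices with respect to `δ : V → ℕ`. -/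
noncomputable def SimpleGraph.excess {V : Type*} (G : SimpleGraph V) (δ : V → ℕ)
    (U : Finset V) : ℤ :=
  (∑ u ∈ U, (δ u : ℤ)) - ({e | e ∈ G.edgeSet ∧ ∀ x ∈ e, x ∈ U} : Set (Sym2 V)).ncard

/-- `C` is the edge set of a cycle of `G`. -/
def SimpleGraph.IsCycleEdgeSet {V : Type*} (G : SimpleGraph V) (C : Set (Sym2 V)) : Prop :=
  ∃ (v : V) (w : G.Walk v v), w.IsCycle ∧ C = {e | e ∈ w.edges}

/-- The number of connected components of the spanning subgraph `(V, S)`. -/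
noncomputable def numComponents (V : Type*) (S : Set (Sym2 V)) : ℕ :=
  Nat.card (SimpleGraph.fromEdgeSet S).ConnectedComponent


namespace MintyAux

variable {V : Type*} {G : SimpleGraph V}

lemma mem_cutSet_iff {U : Set V} {x y : V} (hxy : G.Adj x y) :
    s(x, y) ∈ G.cutSet U ↔ ((x ∈ U ∧ y ∉ U) ∨ (y ∈ U ∧ x ∉ U)) := by
  constructor
  · rintro ⟨a, b, hab, -, haU, hbU⟩
    rw [Sym2.eq_iff] at hab
    rcases hab with ⟨rfl, rfl⟩ | ⟨rfl, rfl⟩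
    · exact Or.inl ⟨haU, hbU⟩
    · exact Or.inr ⟨haU, hbU⟩
  · rintro (⟨h1, h2⟩ | ⟨h1, h2⟩)
    · exact ⟨x, y, rfl, hxy, h1, h2⟩
    · exact ⟨y, x, Sym2.eq_swap.symm, hxy.symm, h1, h2⟩

lemma cutSet_compl (U : Set V) : G.cutSet U = G.cutSet Uᶜ := by
  ext f
  constructor
  · rintro ⟨a, b, rfl, hadj, h1, h2⟩
    exact ⟨b, a, Sym2.eq_swap.symm, hadj.symm, h2, by simpa using h1⟩
  · rintro ⟨a, b, rfl, hadj, h1, h2⟩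
    exact ⟨b, a, Sym2.eq_swap.symm, hadj.symm, by simpa using h2, h1⟩

lemma walk_end_mem {S : Set V} :
    ∀ {u v : V} (p : G.Walk u v),
      (∀ d ∈ p.darts, d.toProd.1 ∈ S → d.toProd.2 ∈ S) → u ∈ S → v ∈ S := by
  intro u v p
  induction p with
  | nil => exact fun _ h => h
  | cons h q ih =>
    intro hstep hu
    exact ih (fun d hd => hstep d (by simp [hd])) (hstep _ List.mem_cons_self hu)

lemma dart_fst_mem {S : Set V} :
    ∀ {u v : V} (p : G.Walk u v) (d : G.Dart),
      (∀ d ∈ p.darts, d.toProd.1 ∈ S → d.toProd.2 ∈ S) → d ∈ p.darts → u ∈ S →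
        d.toProd.1 ∈ S := by
  intro u v p
  induction p with
  | nil => intro d _ hd; simp at hd
  | cons h q ih =>
    intro d hstep hd hu
    rw [SimpleGraph.Walk.darts_cons, List.mem_cons] at hd
    rcases hd with rfl | hd'
    · exact hu
    · exact ih d (fun d hd => hstep d (by simp [hd])) hd' (hstep _ List.mem_cons_self hu)

lemma dart_snd_not_mem {S : Set V} :
    ∀ {u v : V} (p : G.Walk u v) (d : G.Dart),
      (∀ d ∈ p.darts, d.toProd.1 ∈ S → d.toProd.2 ∈ S) → d ∈ p.darts → v ∉ S →
        d.toProd.2 ∉ S := by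
  intro u v p
  induction p with
  | nil => intro d _ hd; simp at hd
  | cons h q ih =>
    intro d hstep hd hv
    rw [SimpleGraph.Walk.darts_cons, List.mem_cons] at hd
    rcases hd with rfl | hd'
    · intro h2
      exact hv (walk_end_mem q (fun d hd => hstep d (by simp [hd])) h2)
    · exact ih d (fun d hd => hstep d (by simp [hd])) hd' hv

lemma exists_dir_walk {O : GraphOrientation G} {u v : V} (h : O.Reaches u v) :
    ∃ p : G.Walk u v, ∀ d ∈ p.darts, O.dir d.toProd.1 d.toProd.2 := by
  induction h with
  | refl => exact ⟨SimpleGraph.Walk.nil, by simp⟩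
  | tail hbc hcd ih =>
    obtain ⟨p, hp⟩ := ih
    refine ⟨p.concat (O.adj_of_dir _ _ hcd), ?_⟩
    intro d hd
    rw [SimpleGraph.Walk.darts_concat, List.concat_eq_append, List.mem_append] at hd
    rcases hd with hd | hd
    · exact hp d hd
    · simp only [List.mem_singleton] at hd
      subst hd
      exact hcd

lemma dart_fst_ne_end {u v : V} {p : G.Walk u v} (hp : p.IsPath) {d : G.Dart}
    (hd : d ∈ p.darts) : d.toProd.1 ≠ v := by
  intro hdv
  have h1 : d.toProd.1 ∈ p.darts.map (fun x => x.toProd.1) := List.mem_map_of_mem hd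
  have h2 : p.darts.map (fun x => x.toProd.1) ++ [v] = p.support :=
    SimpleGraph.Walk.map_fst_darts_append p
  have hnd := hp.support_nodup
  rw [← h2, List.nodup_append] at hnd
  exact hnd.2.2 _ h1 v (List.mem_singleton_self v) hdv

end MintyAux

private lemma minty_key {V : Type*} {G : SimpleGraph V} (hG : G.Connected) (O : GraphOrientation G)
    (a b : V) (hadj : G.Adj a b) (hdir : O.dir a b) :
    Xor' (∃ C : Set (Sym2 V), O.IsDirCycle C ∧ s(a, b) ∈ C)
      (∃ D : Set (Sym2 V), O.IsDirCocycle D ∧ s(a, b) ∈ D) := by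
  classical
  have hnd : ¬ O.dir b a := (O.dir_iff_not a b hadj).mp hdir
  -- not both
  have hnot : ¬ ((∃ C : Set (Sym2 V), O.IsDirCycle C ∧ s(a, b) ∈ C) ∧
      (∃ D : Set (Sym2 V), O.IsDirCocycle D ∧ s(a, b) ∈ D)) := by
    rintro ⟨⟨C, ⟨v, w, hwcyc, hwdir, hCeq⟩, heC⟩, ⟨D, ⟨hcoc, U, hDU, hdirU⟩, heD⟩⟩
    rw [hCeq] at heC
    have heC' : s(a, b) ∈ w.edges := heC
    rw [SimpleGraph.Walk.edges, List.mem_map] at heC'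
    obtain ⟨d, hd, hde⟩ := heC'
    rw [SimpleGraph.dart_edge_eq_mk'_iff'] at hde
    have hdab : d.toProd.1 = a ∧ d.toProd.2 = b := by
      rcases hde with h | h
      · exact h
      · exfalso
        have := hwdir d hd
        rw [h.1, h.2] at this
        exact hnd this
    have hbU : b ∈ U := hdirU a b hdir heD
    have haU : a ∉ U := by
      have hD2 := heD
      rw [hDU] at hD2
      rcases (MintyAux.mem_cutSet_iff hadj).mp hD2 with ⟨h1, h2⟩ | ⟨h1, h2⟩
      · exact absurd hbU h2
      · exact h2
    have hstep : ∀ d' ∈ w.darts, d'.toProd.1 ∈ U → d'.toProd.2 ∈ U := by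
      intro d' hd' h1
      by_contra h2
      have hadj' : G.Adj d'.toProd.1 d'.toProd.2 := O.adj_of_dir _ _ (hwdir d' hd')
      have hmem : s(d'.toProd.1, d'.toProd.2) ∈ D := by
        rw [hDU]
        exact (MintyAux.mem_cutSet_iff hadj').mpr (Or.inl ⟨h1, h2⟩)
      exact h2 (hdirU _ _ (hwdir d' hd') hmem)
    by_cases hv : v ∈ U
    · exact haU (hdab.1 ▸ MintyAux.dart_fst_mem w d hstep hd hv)
    · exact (MintyAux.dart_snd_not_mem w d hstep hd hv) (hdab.2 ▸ hbU)
  have hpos : (∃ C : Set (Sym2 V), O.IsDirCycle C ∧ s(a, b) ∈ C) ∨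
      (∃ D : Set (Sym2 V), O.IsDirCocycle D ∧ s(a, b) ∈ D) := by
    by_cases haU : O.Reaches b a
    · -- directed cycle
      left
      obtain ⟨p, hp⟩ := MintyAux.exists_dir_walk haU
      have hpbpath : p.bypass.IsPath := SimpleGraph.Walk.bypass_isPath p
      have hpbdir : ∀ d ∈ p.bypass.darts, O.dir d.toProd.1 d.toProd.2 :=
        fun d hd => hp d (SimpleGraph.Walk.darts_bypass_subset p hd)
      have hne : s(a, b) ∉ p.bypass.edges := by
        intro hmem
        rw [SimpleGraph.Walk.edges, List.mem_map] at hmem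
        obtain ⟨d, hd, hde⟩ := hmem
        rw [SimpleGraph.dart_edge_eq_mk'_iff'] at hde
        rcases hde with ⟨h1, h2⟩ | ⟨h1, h2⟩
        · exact MintyAux.dart_fst_ne_end hpbpath hd h1
        · have := hpbdir d hd
          rw [h1, h2] at this
          exact hnd this
      have hcyc : (SimpleGraph.Walk.cons hadj p.bypass).IsCycle :=
        (SimpleGraph.Walk.cons_isCycle_iff p.bypass hadj).mpr ⟨hpbpath, hne⟩
      refine ⟨{e | e ∈ (SimpleGraph.Walk.cons hadj p.bypass).edges},
        ⟨a, _, hcyc, ?_, rfl⟩, ?_⟩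
      · intro d hd
        rw [SimpleGraph.Walk.darts_cons, List.mem_cons] at hd
        rcases hd with rfl | hd
        · exact hdir
        · exact hpbdir d hd
      · show s(a, b) ∈ (SimpleGraph.Walk.cons hadj p.bypass).edges
        rw [SimpleGraph.Walk.edges_cons]
        exact List.mem_cons_self
    · -- directed cocycle
      right
      have hUclosed : ∀ x y, O.Reaches b x → O.dir x y → O.Reaches b y :=
        fun x y hx h => hx.tail h
      have hbB : Relation.ReflTransGen
          (fun x y => G.Adj x y ∧ O.Reaches b x ∧ O.Reaches b y) b b :=
        Relation.ReflTransGen.refl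
      set B : Set V :=
        {v | Relation.ReflTransGen (fun x y => G.Adj x y ∧ O.Reaches b x ∧ O.Reaches b y) b v}
        with hBdef
      have hBU : ∀ v ∈ B, O.Reaches b v := by
        intro v hv
        induction hv with
        | refl => exact Relation.ReflTransGen.refl
        | tail h1 h2 ih => exact h2.2.2
      have hBclosed : ∀ x ∈ B, ∀ y, G.Adj x y → O.Reaches b y → y ∈ B :=
        fun x hx y h hy => Relation.ReflTransGen.tail hx ⟨h, hBU x hx, hy⟩
      have haB : a ∉ B := fun h => haU (hBU a h)
      set A : Set V :=
        {v | Relation.ReflTransGen (fun x y => G.Adj x y ∧ x ∉ B ∧ y ∉ B) a v} with hAdef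
      have haA : a ∈ A := Relation.ReflTransGen.refl
      have hAnB : ∀ v ∈ A, v ∉ B := by
        intro v hv
        induction hv with
        | refl => exact haB
        | tail h1 h2 ih => exact h2.2.2
      have hAclosed : ∀ x ∈ A, ∀ y, G.Adj x y → y ∉ B → y ∈ A :=
        fun x hx y h hy => Relation.ReflTransGen.tail hx ⟨h, hAnB x hx, hy⟩
      have hbB' : b ∈ B := hbB
      have hbA : b ∉ A := fun h => hAnB b h hbB'
      have hcutedge : ∀ x y, G.Adj x y → x ∈ A → y ∉ A →
          y ∈ B ∧ O.dir x y ∧ ¬ O.dir y x := by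
        intro x y hxy hxA hyA
        have hyB : y ∈ B := by
          by_contra hyB
          exact hyA (hAclosed x hxA y hxy hyB)
        have hxU : ¬ O.Reaches b x := by
          intro hxU
          exact hAnB x hxA (hBclosed y hyB x hxy.symm hxU)
        have hnyx : ¬ O.dir y x := fun h => hxU (hUclosed y x (hBU y hyB) h)
        exact ⟨hyB, (O.dir_iff_not x y hxy).mpr hnyx, hnyx⟩
      have heD : s(a, b) ∈ G.cutSet A := ⟨a, b, rfl, hadj, haA, hbA⟩
      have hinA : ∀ x y, x ∈ A → y ∈ A → s(x, y) ∉ G.cutSet A := by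
        rintro x y hx hy ⟨p, q, hpq, -, hpA, hqA⟩
        rw [Sym2.eq_iff] at hpq
        rcases hpq with ⟨rfl, rfl⟩ | ⟨rfl, rfl⟩
        · exact hqA hy
        · exact hqA hx
      have hinAc : ∀ x y, x ∉ A → y ∉ A → s(x, y) ∉ G.cutSet A := by
        rintro x y hx hy ⟨p, q, hpq, -, hpA, hqA⟩
        rw [Sym2.eq_iff] at hpq
        rcases hpq with ⟨rfl, rfl⟩ | ⟨rfl, rfl⟩
        · exact hx hpA
        · exact hy hpA
      have hBchain : ∀ v ∈ B,
          Relation.ReflTransGen (fun x y => G.Adj x y ∧ x ∉ A ∧ y ∉ A) b v := by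
        intro v hv
        induction hv with
        | refl => exact Relation.ReflTransGen.refl
        | @tail x y h1 h2 ih =>
          have hxB : x ∈ B := h1
          have hyB : y ∈ B := Relation.ReflTransGen.tail h1 h2
          exact Relation.ReflTransGen.tail ih
            ⟨h2.1, fun hxA => hAnB x hxA hxB, fun hyA => hAnB y hyA hyB⟩
      have main : ∀ (v u : V) (p : G.Walk v u), u = b → v ∉ A →
          Relation.ReflTransGen (fun x y => G.Adj x y ∧ x ∉ A ∧ y ∉ A) b v := by
        intro v u p
        induction p with
        | nil =>
          rintro rfl _
          exact Relation.ReflTransGen.refl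
        | @cons x y z h q ih =>
          rintro rfl hxA
          by_cases hxB : x ∈ B
          · exact hBchain x hxB
          · by_cases hyB : y ∈ B
            · have hyA : y ∉ A := fun hyA' => hAnB y hyA' hyB
              exact Relation.ReflTransGen.tail (hBchain y hyB) ⟨h.symm, hyA, hxA⟩
            · have hyA : y ∉ A := fun hyA' => hxA (hAclosed y hyA' x h.symm hxB)
              exact Relation.ReflTransGen.tail (ih rfl hyA) ⟨h.symm, hyA, hxA⟩
      have hconnAc : ∀ v, v ∉ A →
          Relation.ReflTransGen (fun x y => G.Adj x y ∧ x ∉ A ∧ y ∉ A) b v :=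
        fun v hv => (hG.preconnected v b).elim fun p => main v b p rfl hv
      refine ⟨G.cutSet A, ⟨⟨⟨s(a, b), heD⟩, ⟨A, rfl⟩, ?_⟩, Aᶜ, MintyAux.cutSet_compl A, ?_⟩, heD⟩
      · -- minimality
        intro D' hne hcut hsub
        obtain ⟨W, hW⟩ := hcut
        have hWiff : ∀ x y, G.Adj x y → s(x, y) ∉ D' → (x ∈ W ↔ y ∈ W) := by
          intro x y hxy hnm
          constructor
          · intro hx
            by_contra hy
            refine hnm ?_
            rw [hW]
            exact (MintyAux.mem_cutSet_iff hxy).mpr (Or.inl ⟨hx, hy⟩)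
          · intro hy
            by_contra hx
            refine hnm ?_
            rw [hW]
            exact (MintyAux.mem_cutSet_iff hxy).mpr (Or.inr ⟨hy, hx⟩)
        have hconstA : ∀ v ∈ A, (v ∈ W ↔ a ∈ W) := by
          intro v hv
          induction hv with
          | refl => exact Iff.rfl
          | @tail x y h1 h2 ih =>
            have hxA : x ∈ A := h1
            have hyA : y ∈ A := Relation.ReflTransGen.tail h1 h2
            have hnm : s(x, y) ∉ D' := fun hmem => hinA x y hxA hyA (hsub hmem)
            exact (hWiff x y h2.1 hnm).symm.trans ih
        have hconstAc : ∀ v, Relation.ReflTransGen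
            (fun x y => G.Adj x y ∧ x ∉ A ∧ y ∉ A) b v → (v ∈ W ↔ b ∈ W) := by
          intro v hchain
          induction hchain with
          | refl => exact Iff.rfl
          | @tail x y h1 h2 ih =>
            have hnm : s(x, y) ∉ D' := fun hmem => hinAc x y h2.2.1 h2.2.2 (hsub hmem)
            exact (hWiff x y h2.1 hnm).symm.trans ih
        have hsplit : ¬ (a ∈ W ↔ b ∈ W) := by
          obtain ⟨f, hf⟩ := hne
          obtain ⟨x, y, hfeq, hfadj, hxA, hyA⟩ := hsub hf
          have hfW : f ∈ G.cutSet W := by rw [← hW]; exact hf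
          rw [hfeq] at hfW
          have hxa := hconstA x hxA
          have hyb := hconstAc y (hconnAc y hyA)
          rcases (MintyAux.mem_cutSet_iff hfadj).mp hfW with ⟨h1, h2⟩ | ⟨h1, h2⟩
          · intro hiff
            exact h2 (hyb.mpr (hiff.mp (hxa.mp h1)))
          · intro hiff
            exact h2 (hxa.mpr (hiff.mpr (hyb.mp h1)))
        have hDD' : G.cutSet A ⊆ D' := by
          rintro g ⟨x, y, rfl, hgadj, hxA, hyA⟩
          have hxa := hconstA x hxA
          have hyb := hconstAc y (hconnAc y hyA)
          rw [hW]
          refine (MintyAux.mem_cutSet_iff hgadj).mpr ?_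
          by_cases haW : a ∈ W
          · have hbW : b ∉ W := fun h => hsplit ⟨fun _ => h, fun _ => haW⟩
            exact Or.inl ⟨hxa.mpr haW, fun h => hbW (hyb.mp h)⟩
          · have hbW : b ∈ W := by
              by_contra hbW
              exact hsplit ⟨fun h => (haW h).elim, fun h => (hbW h).elim⟩
            exact Or.inr ⟨hyb.mpr hbW, fun h => haW (hxa.mp h)⟩
        exact Set.Subset.antisymm hsub hDD'
      · -- direction
        intro p q hpq hmem
        obtain ⟨x, y, heq, hadj', hxA, hyA⟩ := hmem
        have hce := hcutedge x y hadj' hxA hyA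
        rw [Sym2.eq_iff] at heq
        rcases heq with ⟨rfl, rfl⟩ | ⟨rfl, rfl⟩
        · exact hyA
        · exact absurd hpq hce.2.2
  rcases hpos with hP | hQ
  · exact Or.inl ⟨hP, fun hQ => hnot ⟨hP, hQ⟩⟩
  · exact Or.inr ⟨hQ, fun hP => hnot ⟨hP, hQ⟩⟩


theorem statement4 {V : Type*} [Fintype V] (G : SimpleGraph V) (hG : G.Connected)
    (O : GraphOrientation G) (e : Sym2 V) (he : e ∈ G.edgeSet) :
    Xor' (∃ C : Set (Sym2 V), O.IsDirCycle C ∧ e ∈ C)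
      (∃ D : Set (Sym2 V), O.IsDirCocycle D ∧ e ∈ D) := by
  revert he
  induction e using Sym2.ind with
  | _ x y =>
    intro he
    rw [SimpleGraph.mem_edgeSet] at he
    by_cases hd : O.dir x y
    · exact minty_key hG O x y he hd
    · have hd' : O.dir y x := (O.dir_iff_not y x he.symm).mpr hd
      rw [Sym2.eq_swap]
      exact minty_key hG O y x he.symm hd'
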